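/- For every r ∈ R = A^{coπ}, the element (π ⊗ id_A)(Δ(r)) = Σ π(r_(1)) ⊗ r_(2) lies in H ⊗ R (i.e. its second tensor legs can be taken to be coinvariants); thus δ(r) := (π ⊗ id)(Δ(r)) defines a left H-comodule structure on R. -/
import Mathlib
set_option maxHeartbeats 1000000
set_option synthInstance.maxHeartbeats 400000


open TensorProduct

/-- The coinvariant subalgebra `R = A^{co π} = {a | Σ a₍₁₎ ⊗ π(a₍₂₎) = a ⊗ 1}` as a
`k`-submodule of `A` (it is the kernel of a linear map). -/
noncomputable def coinvSubmodule {k A H : Type*} [Field k] [Ring A] [HopfAlgebra k A]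
    [Ring H] [HopfAlgebra k H] (π : A →ₐc[k] H) : Submodule k A :=
  LinearMap.ker
    ((TensorProduct.map LinearMap.id (π : A →ₗ[k] H)).comp (Coalgebra.comul (R := k)) -
      (TensorProduct.mk k A H).flip (1 : H))

/-- for `r ∈ R = A^{co π}`, the element `Σ π(r₍₁₎) ⊗ r₍₂₎` lies in `H ⊗ R`
inside `H ⊗ A`; thus `δ(r) = (π ⊗ id)Δ(r)` defines a left `H`-comodule structure on `R`. -/
theorem coinvariants_comodule
    {k A H : Type*} [Field k] [Ring A] [HopfAlgebra k A] [Ring H] [HopfAlgebra k H]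
    (hSA : Function.Bijective (HopfAlgebra.antipode (R := k) (A := A)))
    (hSH : Function.Bijective (HopfAlgebra.antipode (R := k) (A := H)))
    (π : A →ₐc[k] H) (ι : H →ₐc[k] A) (hπι : ∀ h : H, π (ι h) = h) :
    ∀ r ∈ coinvSubmodule π,
      (TensorProduct.map (π : A →ₗ[k] H) LinearMap.id) (Coalgebra.comul r) ∈
        LinearMap.range
          (TensorProduct.map (LinearMap.id (M := H)) (coinvSubmodule π).subtype) := by
  intro r hr
  set πL : A →ₗ[k] H := (π : A →ₗ[k] H)
  set f : A →ₗ[k] A ⊗[k] H :=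
    (TensorProduct.map LinearMap.id πL).comp (Coalgebra.comul (R := k)) -
      (TensorProduct.mk k A H).flip (1 : H) with hf
  -- exactness: 0 → R → A → A ⊗ H  tensored with H (flat over a field)
  have hexact : Function.Exact ((coinvSubmodule π).subtype) f := by
    rw [LinearMap.exact_iff, Submodule.range_subtype]
    rfl
  have hexactT : Function.Exact (((coinvSubmodule π).subtype).lTensor H) (f.lTensor H) :=
    Module.Flat.lTensor_exact H hexact
  have hmem : f.lTensor H ((TensorProduct.map πL LinearMap.id) (Coalgebra.comul r)) = 0 := by
    -- reduce to a computation in A ⊗ (A ⊗ H)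
    have key : f.lTensor A (Coalgebra.comul r) = 0 := by
      have hr' : (TensorProduct.map LinearMap.id πL) (Coalgebra.comul r) = r ⊗ₜ[k] 1 := by
        have := hr
        simp only [coinvSubmodule, LinearMap.mem_ker, LinearMap.sub_apply, LinearMap.comp_apply,
          sub_eq_zero] at this
        simpa using this
      rw [hf]
      rw [LinearMap.lTensor_sub, LinearMap.sub_apply, sub_eq_zero]
      -- LHS: (id ⊗ ((id⊗π)∘Δ)) Δ r ; RHS: (id ⊗ (·⊗1)) Δ r
      have h1 : ((TensorProduct.map (LinearMap.id (M := A)) πL).comp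
            (Coalgebra.comul (R := k))).lTensor A (Coalgebra.comul r)
          = (TensorProduct.assoc k A A H)
              ((LinearMap.lTensor (A ⊗[k] A) πL)
                ((Coalgebra.comul (R := k)).rTensor A (Coalgebra.comul r))) := by
        rw [LinearMap.lTensor_comp, LinearMap.comp_apply]
        rw [← Coalgebra.coassoc_apply]
        -- now goal: lTensor A (map id πL) (assoc x) = assoc (lTensor (A⊗A) πL x)
        induction ((Coalgebra.comul (R := k)).rTensor A (Coalgebra.comul r)) using
            TensorProduct.induction_on with
        | zero => simp
        | tmul x y =>
          induction x using TensorProduct.induction_on with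
          | zero => simp
          | tmul a b => simp
          | add u v hu hv => simp [add_tmul, hu, hv]
        | add u v hu hv => simp [map_add, hu, hv]
      rw [h1]
      have h2 : (LinearMap.lTensor (A ⊗[k] A) πL)
            ((Coalgebra.comul (R := k)).rTensor A (Coalgebra.comul r))
          = (Coalgebra.comul (R := k)).rTensor H
              ((TensorProduct.map LinearMap.id πL) (Coalgebra.comul r)) := by
        induction (Coalgebra.comul (R := k) r) using TensorProduct.induction_on with
        | zero => simp
        | tmul a b => simp
        | add u v hu hv => simp [map_add, hu, hv]
      rw [h2, hr']
      simp only [LinearMap.rTensor_tmul]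
      -- goal: assoc (Δr ⊗ 1) = (lTensor A ((mk).flip 1)) (Δ r)
      induction (Coalgebra.comul (R := k) r) using TensorProduct.induction_on with
      | zero => simp
      | tmul a b => simp
      | add u v hu hv => simp [add_tmul, map_add, hu, hv]
    -- transport the vanishing through π on the first leg
    have : (TensorProduct.map πL LinearMap.id) ∘ₗ (f.lTensor A)
        = (f.lTensor H) ∘ₗ (TensorProduct.map πL LinearMap.id) := by
      ext a b
      simp
    calc f.lTensor H ((TensorProduct.map πL LinearMap.id) (Coalgebra.comul r))
        = (TensorProduct.map πL LinearMap.id) (f.lTensor A (Coalgebra.comul r)) := by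
          rw [← LinearMap.comp_apply, ← this, LinearMap.comp_apply]
      _ = 0 := by rw [key, map_zero]
  have := (hexactT _).mp hmem
  simpa [LinearMap.lTensor] using this
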